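/- Let a₁, …, aₙ be real symmetric 3×3 matrices. There exist g ∈ SO(3) and real numbers pₖ, qₖ such that g aₖ gᵀ = diag(pₖ, pₖ, qₖ) for every k (i.e., the n-tuple has at least isotropy class [O(2)]) if and only if for every k the deviatoric part dev(aₖ) has a repeated eigenvalue — equivalently (tr((dev aₖ)²))³ = 54 (det(dev aₖ))² — and for all k, l the Cauchy–Schwarz equality (tr(dev aₖ · dev aₗ))² = tr((dev aₖ)²) · tr((dev aₗ)²) holds. -/

import Mathlib

open Matrix BigOperators

abbrev Mat3 := Matrix (Fin 3) (Fin 3) ℝ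

/-- `g ∈ SO(3)`: real orthogonal 3×3 matrix of determinant 1. -/
def IsSO3 (g : Mat3) : Prop := g * gᵀ = 1 ∧ g.det = 1

/-- The deviatoric (traceless) part of a 3×3 matrix. -/
noncomputable def dev (m : Mat3) : Mat3 := m - (m.trace / 3) • 1

noncomputable section AuxO2

namespace AuxO2

/-! ### Generic 3×3 matrix toolbox -/

lemma trace_sq_eq (S : Mat3) (h : Sᵀ = S) :
    (S * S).trace = ∑ i, ∑ j, (S i j)^2 := by
  simp only [Matrix.trace, Matrix.diag, Matrix.mul_apply]
  refine Finset.sum_congr rfl fun i _ => Finset.sum_congr rfl fun j _ => ?_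
  have := congrFun (congrFun h j) i
  simp [Matrix.transpose_apply] at this
  rw [this]; ring

lemma symm_eq_zero (S : Mat3) (h : Sᵀ = S) (h0 : (S * S).trace = 0) : S = 0 := by
  rw [trace_sq_eq S h] at h0
  have hz : ∀ i ∈ Finset.univ, ∀ j ∈ Finset.univ, (S i j)^2 = 0 := by
    intro i _ j _
    have h1 : ∀ i ∈ (Finset.univ : Finset (Fin 3)), 0 ≤ ∑ j, (S i j)^2 :=
      fun i _ => Finset.sum_nonneg fun j _ => sq_nonneg _
    have h2 := (Finset.sum_eq_zero_iff_of_nonneg h1).1 h0 i (Finset.mem_univ i)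
    have h3 := (Finset.sum_eq_zero_iff_of_nonneg (fun j _ => sq_nonneg (S i j))).1 h2 j (Finset.mem_univ j)
    exact h3
  ext i j
  simpa using pow_eq_zero_iff (n := 2) (by norm_num) |>.1 (hz i (Finset.mem_univ i) j (Finset.mem_univ j))

lemma trace_sq_nonneg (S : Mat3) (h : Sᵀ = S) : 0 ≤ (S * S).trace := by
  rw [trace_sq_eq S h]
  exact Finset.sum_nonneg fun i _ => Finset.sum_nonneg fun j _ => sq_nonneg _

lemma conj_vvt (g : Mat3) (u : Fin 3 → ℝ) :
    g * vecMulVec u u * gᵀ = vecMulVec (g.mulVec u) (g.mulVec u) := by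
  ext i j
  simp [Matrix.mul_apply, Matrix.vecMulVec_apply, Matrix.mulVec, dotProduct,
    Fin.sum_univ_three, Matrix.transpose_apply]
  ring

lemma cayley3 (m : Mat3) :
    m * m * m = m.trace • (m * m) + (((m*m).trace - m.trace^2)/2) • m + m.det • (1:Mat3) := by
  ext i j
  fin_cases i <;> fin_cases j <;>
    simp [Matrix.mul_apply, Fin.sum_univ_three, Matrix.trace, Matrix.diag,
      Matrix.det_fin_three, Matrix.one_apply] <;> ring

lemma poly_id (m : Mat3) (r : ℝ) :
    (m*m + r•m - (2*r^2)•(1:Mat3)) * (m*m + r•m - (2*r^2)•(1:Mat3))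
      = (m + (2*r)•(1:Mat3)) * (m*m*m - (3*r^2)•m + (2*r^3)•(1:Mat3)) := by
  ext i j
  fin_cases i <;> fin_cases j <;>
    simp [Matrix.mul_apply, Fin.sum_univ_three, Matrix.one_apply] <;> ring

/-! ### Structure of symmetric traceless matrices with repeated eigenvalue -/

lemma exists_r (m : Mat3) (hs : mᵀ = m)
    (hd : ((m*m).trace)^3 = 54 * m.det^2) :
    ∃ r : ℝ, (m*m).trace = 6*r^2 ∧ m.det = -2*r^3 := by
  set T := (m*m).trace with hTdef
  have hT0 : 0 ≤ T := trace_sq_nonneg m hs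
  set s := Real.sqrt (T/6) with hsdef
  have hs2 : s^2 = T/6 := Real.sq_sqrt (by linarith)
  have h1 : (s^3)^2 = (m.det/2)^2 := by
    have : (s^2)^3 = (m.det/2)^2 := by rw [hs2]; linear_combination (1/216) * hd
    linear_combination this
  have h2 : s^3 = m.det/2 ∨ s^3 = -(m.det/2) := sq_eq_sq_iff_eq_or_eq_neg.mp h1
  rcases h2 with h | h
  · exact ⟨-s, by linear_combination (-6)*hs2, by linarith [h]⟩
  · exact ⟨s, by linear_combination (-6)*hs2, by linarith [h]⟩

lemma exists_axis (m : Mat3) (hs : mᵀ = m) (ht : m.trace = 0)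
    (hd : ((m*m).trace)^3 = 54 * m.det^2) :
    ∃ r : ℝ, ∃ u : Fin 3 → ℝ, u 0^2 + u 1^2 + u 2^2 = 1 ∧
      m = r • (1:Mat3) - (3*r) • vecMulVec u u ∧ (m*m).trace = 6*r^2 := by
  obtain ⟨r, hT, hdet⟩ := exists_r m hs hd
  have hz : m*m*m - (3*r^2) • m + (2*r^3) • (1:Mat3) = 0 := by
    rw [cayley3 m, ht, hT, hdet]; module
  have hC : m*m + r•m - (2*r^2)•(1:Mat3) = 0 := by
    apply symm_eq_zero
    · simp [Matrix.transpose_add, Matrix.transpose_sub, Matrix.transpose_mul,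
        Matrix.transpose_smul, hs]
    · rw [poly_id m r, hz, Matrix.mul_zero, Matrix.trace_zero]
  have h2 : m * m = (2*r^2)•(1:Mat3) - r•m := by
    have h3 : m*m = (m*m + r•m - (2*r^2)•(1:Mat3)) + ((2*r^2)•(1:Mat3) - r•m) := by abel
    rw [h3, hC, zero_add]
  by_cases hr : r = 0
  · have hm0 : m = 0 := by
      apply symm_eq_zero m hs; rw [hT, hr]; ring
    refine ⟨0, ![0,0,1], by norm_num [Matrix.cons_val_two, Matrix.tail_cons], by simp [hm0], by rw [hT, hr]⟩
  · set N : Mat3 := r•(1:Mat3) - m with hNdef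
    have hN2 : N * N = (3*r) • N := by
      simp only [hNdef, Matrix.sub_mul, Matrix.mul_sub, Matrix.smul_mul, Matrix.mul_smul,
        one_mul, mul_one, h2, smul_smul]
      module
    set P : Mat3 := (1/(3*r)) • N with hPdef
    have hPP : P * P = P := by
      rw [hPdef, Matrix.smul_mul, Matrix.mul_smul, hN2, smul_smul, smul_smul]
      congr 1
      field_simp
    have hPt : Pᵀ = P := by
      simp [hPdef, hNdef, Matrix.transpose_smul, Matrix.transpose_sub, hs]
    have htrP : P.trace = 1 := by
      simp [hPdef, hNdef, Matrix.trace_smul, Matrix.trace_sub, Matrix.trace_one,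
        Matrix.trace_smul, ht]
      field_simp
    have hPne : P ≠ 0 := by
      intro h; rw [h] at htrP; simp at htrP
    have hex : ∃ i j, P i j ≠ 0 := by
      by_contra h; push_neg at h
      exact hPne (by ext i j; simpa using h i j)
    obtain ⟨i0, j0, hij⟩ := hex
    set c : Fin 3 → ℝ := fun i => P i j0 with hcdef
    have hPc : P.mulVec c = c := by
      funext i
      have := congrFun (congrFun hPP i) j0
      simpa [Matrix.mulVec, dotProduct, Matrix.mul_apply, hcdef] using this
    set ρ2 : ℝ := c 0^2 + c 1^2 + c 2^2 with hρ2def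
    have hρ2pos : 0 < ρ2 := by
      have h1 : 0 < (c i0)^2 := by positivity
      have hcases : i0 = 0 ∨ i0 = 1 ∨ i0 = 2 := by omega
      rcases hcases with h | h | h <;> rw [h] at h1 <;>
        nlinarith [sq_nonneg (c 0), sq_nonneg (c 1), sq_nonneg (c 2)]
    set ρ := Real.sqrt ρ2 with hρdef
    have hρsq : ρ^2 = ρ2 := Real.sq_sqrt hρ2pos.le
    have hρne : ρ ≠ 0 := by
      intro h; rw [h] at hρsq; simp at hρsq; linarith
    set u : Fin 3 → ℝ := fun i => c i / ρ with hudef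
    have hu1 : u 0^2 + u 1^2 + u 2^2 = 1 := by
      simp only [hudef, div_pow]
      rw [← add_div, ← add_div, hρsq]
      field_simp
      exact hρ2def.symm
    have hPu : P.mulVec u = u := by
      have : u = ρ⁻¹ • c := by funext i; simp [hudef, div_eq_inv_mul, smul_eq_mul]
      rw [this, Matrix.mulVec_smul, hPc]
    set U : Mat3 := vecMulVec u u with hUdef
    have hUt : Uᵀ = U := by
      ext i j; simp [hUdef, Matrix.vecMulVec_apply, Matrix.transpose_apply]; ring
    have hUU : U * U = U := by
      ext i j
      simp only [hUdef, Matrix.mul_apply, Matrix.vecMulVec_apply, Fin.sum_univ_three]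
      linear_combination (u i * u j) * hu1
    have hPU : P * U = U := by
      ext i j
      have h := congrFun hPu i
      simp only [Matrix.mulVec, dotProduct, Fin.sum_univ_three] at h
      simp only [hUdef, Matrix.mul_apply, Matrix.vecMulVec_apply, Fin.sum_univ_three]
      linear_combination (u j) * h
    have hUP : U * P = U := by
      have := congrArg Matrix.transpose hPU
      rwa [Matrix.transpose_mul, hPt, hUt] at this
    have hQ : P - U = 0 := by
      apply symm_eq_zero
      · rw [Matrix.transpose_sub, hPt, hUt]
      · have hQQ : (P - U) * (P - U) = P - U := by
          rw [Matrix.sub_mul, Matrix.mul_sub, Matrix.mul_sub, hPP, hPU, hUP, hUU]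
          abel
        rw [hQQ, Matrix.trace_sub, htrP]
        have : U.trace = 1 := by
          simp only [hUdef, Matrix.trace, Matrix.diag, Matrix.vecMulVec_apply,
            Fin.sum_univ_three]
          linear_combination hu1
        rw [this]; ring
    have hPU' : P = U := sub_eq_zero.mp hQ
    refine ⟨r, u, hu1, ?_, hT⟩
    have h3rP : (3*r) • P = N := by
      rw [hPdef, smul_smul]
      have : (3*r) * (1/(3*r)) = 1 := by field_simp
      rw [this, one_smul]
    have : m = r•(1:Mat3) - N := by rw [hNdef]; abel
    rw [this, ← h3rP, hPU', hUdef]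

/-! ### A rotation sending a unit vector to `e₃` -/

lemma vvt_sq (w : Fin 3 → ℝ) (d : ℝ) (hww : w 0^2 + w 1^2 + w 2^2 = d) :
    vecMulVec w w * vecMulVec w w = d • vecMulVec w w := by
  ext i j
  simp only [Matrix.mul_apply, Matrix.vecMulVec_apply, Fin.sum_univ_three,
    Matrix.smul_apply, smul_eq_mul]
  linear_combination (w i * w j) * hww

lemma vvt_symm (w : Fin 3 → ℝ) : (vecMulVec w w)ᵀ = vecMulVec w w := by
  ext i j; simp [Matrix.vecMulVec_apply]; ring

lemma householder_orth (w : Fin 3 → ℝ) (d : ℝ) (hdne : d ≠ 0)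
    (hww : w 0^2 + w 1^2 + w 2^2 = d) :
    (1 - (2/d) • vecMulVec w w) * (1 - (2/d) • vecMulVec w w) = 1 := by
  have key : ((2/d) * (2/d) * d) = 4/d := by field_simp; ring
  calc (1 - (2/d) • vecMulVec w w) * (1 - (2/d) • vecMulVec w w)
      = 1 - (4/d) • vecMulVec w w + ((2/d)*(2/d)*d) • vecMulVec w w := by
        simp only [Matrix.sub_mul, Matrix.mul_sub, Matrix.smul_mul, Matrix.mul_smul,
          one_mul, mul_one, vvt_sq w d hww, smul_smul]
        module
    _ = 1 := by rw [key]; module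

lemma householder_det (w : Fin 3 → ℝ) (d : ℝ) (hdne : d ≠ 0)
    (hww : w 0^2 + w 1^2 + w 2^2 = d) :
    (1 - (2/d) • vecMulVec w w : Mat3).det = -1 := by
  have hdd : (1 - (2/d) • vecMulVec w w : Mat3).det
      = 1 - (2/d)*(w 0^2 + w 1^2 + w 2^2) := by
    simp [Matrix.det_fin_three, Matrix.one_apply, Matrix.vecMulVec_apply]
    ring
  rw [hdd, hww]
  field_simp
  norm_num

lemma householder_maps (u : Fin 3 → ℝ) (hu : u 0^2 + u 1^2 + u 2^2 = 1)
    (hdne : (2 - 2 * u 2) ≠ 0) :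
    (1 - (2/(2 - 2*u 2)) • vecMulVec ![u 0, u 1, u 2 - 1] ![u 0, u 1, u 2 - 1] : Mat3).mulVec u
      = ![0,0,1] := by
  funext i
  have hc : i = 0 ∨ i = 1 ∨ i = 2 := by omega
  have h1u : (1:ℝ) - u 2 ≠ 0 := fun h => hdne (by linarith)
  rcases hc with h | h | h <;> subst h <;>
    simp only [Matrix.mulVec, dotProduct, Fin.sum_univ_three, Matrix.sub_apply,
      Matrix.smul_apply, Matrix.one_apply, Matrix.vecMulVec_apply, smul_eq_mul,
      Matrix.cons_val_zero, Matrix.cons_val_one, Matrix.head_cons, Matrix.cons_val_two,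
      Matrix.tail_cons] <;>
    norm_num [Fin.ext_iff] <;>
    field_simp <;>
    first
      | linear_combination (2*u 0)*hu
      | linear_combination (-2*u 0)*hu
      | linear_combination (2*u 1)*hu
      | linear_combination (-2*u 1)*hu
      | linear_combination (2*(u 2 - 1))*hu
      | linear_combination (-2*(u 2 - 1))*hu
      | linear_combination (2*(1 - u 2))*hu
      | linear_combination ((2 - 2*u 2))*hu
      | linear_combination (2*u 0)*(2-2*u 2)^2*hu
      | linear_combination (-2*u 0)*(2-2*u 2)^2*hu
      | linear_combination (2*u 1)*(2-2*u 2)^2*hu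
      | linear_combination (-2*u 1)*(2-2*u 2)^2*hu
      | linear_combination (2*(u 2 - 1))*(2-2*u 2)^2*hu
      | linear_combination (-2*(u 2 - 1))*(2-2*u 2)^2*hu
      | linear_combination (1 - u 2)*hu
      | linear_combination (u 0)*hu
      | linear_combination (-u 0)*hu
      | linear_combination (u 1)*hu
      | linear_combination (-u 1)*hu

lemma exists_rot (u : Fin 3 → ℝ) (hu : u 0^2 + u 1^2 + u 2^2 = 1) :
    ∃ g : Mat3, IsSO3 g ∧ g.mulVec u = ![0,0,1] := by
  by_cases h2 : u 2 = 1
  · refine ⟨1, ⟨by simp, by simp⟩, ?_⟩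
    have h0 : u 0 = 0 := by nlinarith [sq_nonneg (u 0), sq_nonneg (u 1)]
    have h1 : u 1 = 0 := by nlinarith [sq_nonneg (u 0), sq_nonneg (u 1)]
    rw [Matrix.one_mulVec]
    funext i
    have hc : i = 0 ∨ i = 1 ∨ i = 2 := by omega
    rcases hc with h | h | h <;> subst h <;> simp [h0, h1, h2]
  · have hdne : (2 - 2 * u 2) ≠ 0 := fun h => h2 (by linarith)
    have hww : (![u 0, u 1, u 2 - 1] : Fin 3 → ℝ) 0 ^2
        + (![u 0, u 1, u 2 - 1] : Fin 3 → ℝ) 1 ^2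
        + (![u 0, u 1, u 2 - 1] : Fin 3 → ℝ) 2 ^2 = 2 - 2 * u 2 := by
      simp only [Matrix.cons_val_zero, Matrix.cons_val_one, Matrix.head_cons,
        Matrix.cons_val_two, Matrix.tail_cons]
      linear_combination hu
    set w : Fin 3 → ℝ := ![u 0, u 1, u 2 - 1]
    set H : Mat3 := 1 - (2/(2 - 2*u 2)) • vecMulVec w w with hHdef
    have hHt : Hᵀ = H := by
      rw [hHdef, Matrix.transpose_sub, Matrix.transpose_smul, vvt_symm, Matrix.transpose_one]
    have hHH : H * H = 1 := householder_orth w _ hdne hww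
    have hdetH : H.det = -1 := householder_det w _ hdne hww
    set D : Mat3 := Matrix.diagonal ![(-1:ℝ),1,1] with hDdef
    have hDt : Dᵀ = D := Matrix.diagonal_transpose _
    have hDD : D * D = 1 := by
      rw [hDdef, Matrix.diagonal_mul_diagonal]
      ext i j
      fin_cases i <;> fin_cases j <;> simp [Matrix.diagonal, Matrix.one_apply]
    have hdetD : D.det = -1 := by
      rw [hDdef, Matrix.det_diagonal, Fin.prod_univ_three]; norm_num [Matrix.cons_val_two, Matrix.tail_cons]
    refine ⟨D * H, ⟨?_, ?_⟩, ?_⟩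
    · rw [Matrix.transpose_mul, hHt, hDt, Matrix.mul_assoc, ← Matrix.mul_assoc H H D,
        hHH, Matrix.one_mul, hDD]
    · rw [Matrix.det_mul, hdetH, hdetD]; norm_num
    · rw [← Matrix.mulVec_mulVec, householder_maps u hu hdne]
      funext i
      have hc : i = 0 ∨ i = 1 ∨ i = 2 := by omega
      rcases hc with h | h | h <;> subst h <;>
        simp [hDdef, Matrix.mulVec, dotProduct, Fin.sum_univ_three, Matrix.diagonal]

/-! ### Trace computations and small facts -/

lemma trace_pair (r s : ℝ) (u v : Fin 3 → ℝ)
    (hu : u 0^2 + u 1^2 + u 2^2 = 1) (hv : v 0^2 + v 1^2 + v 2^2 = 1) :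
    ((r•(1:Mat3) - (3*r)•vecMulVec u u) * (s•(1:Mat3) - (3*s)•vecMulVec v v)).trace
      = r*s*(9*(u 0*v 0 + u 1*v 1 + u 2*v 2)^2 - 3) := by
  simp only [Matrix.trace, Matrix.diag, Matrix.mul_apply, Matrix.sub_apply,
    Matrix.smul_apply, Matrix.one_apply, Matrix.vecMulVec_apply, smul_eq_mul,
    Fin.sum_univ_three]
  norm_num [Fin.ext_iff]
  linear_combination (-3*r*s)*hu + (-3*r*s)*hv

lemma smul_one_add_smul_diag (x y : ℝ) :
    x•(1:Mat3) + y • Matrix.diagonal ![0,0,1] = Matrix.diagonal ![x,x,x+y] := by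
  ext i j
  fin_cases i <;> fin_cases j <;> simp [Matrix.diagonal, Matrix.one_apply]

lemma smul_one_diag (x : ℝ) : x•(1:Mat3) = Matrix.diagonal ![x,x,x] := by
  ext i j
  fin_cases i <;> fin_cases j <;> simp [Matrix.diagonal, Matrix.one_apply]

lemma vvt_e3 : vecMulVec (![0,0,1] : Fin 3 → ℝ) ![0,0,1] = Matrix.diagonal ![0,0,1] := by
  ext i j
  fin_cases i <;> fin_cases j <;> simp [Matrix.diagonal, Matrix.vecMulVec_apply]

lemma dev_transpose (m : Mat3) (h : mᵀ = m) : (dev m)ᵀ = dev m := by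
  simp [dev, Matrix.transpose_sub, Matrix.transpose_smul, h]

lemma dev_trace (m : Mat3) : (dev m).trace = 0 := by
  simp [dev, Matrix.trace_sub, Matrix.trace_smul, Matrix.trace_one]

lemma dev_add (m : Mat3) : m = dev m + (m.trace/3) • 1 := by
  simp [dev]

lemma conj_trace (g : Mat3) (hg : g * gᵀ = 1) (X : Mat3) : (g * X * gᵀ).trace = X.trace := by
  have hgt : gᵀ * g = 1 := mul_eq_one_comm.mp hg
  rw [Matrix.trace_mul_cycle, hgt, Matrix.one_mul]

lemma conj_dev (g m : Mat3) (hg : g * gᵀ = 1) : g * dev m * gᵀ = dev (g * m * gᵀ) := by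
  rw [dev, dev, conj_trace g hg m, Matrix.mul_sub, Matrix.sub_mul, Matrix.mul_smul,
    Matrix.mul_one, Matrix.smul_mul, hg]

lemma conj_recover (g X D : Mat3) (hg : g * gᵀ = 1) (h : g * X * gᵀ = D) :
    X = gᵀ * D * g := by
  have hgt : gᵀ * g = 1 := mul_eq_one_comm.mp hg
  rw [← h, ← Matrix.mul_assoc, ← Matrix.mul_assoc, hgt, Matrix.one_mul,
    Matrix.mul_assoc, hgt, Matrix.mul_one]

lemma dev_diag (p q : ℝ) : dev (Matrix.diagonal ![p,p,q])
    = Matrix.diagonal ![(p-q)/3, (p-q)/3, -2*((p-q)/3)] := by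
  have ht : (Matrix.diagonal ![p,p,q] : Mat3).trace = p + p + q := by
    simp [Matrix.trace_diagonal, Fin.sum_univ_three]
  rw [dev, ht]
  ext i j
  fin_cases i <;> fin_cases j <;> simp [Matrix.diagonal, Matrix.one_apply] <;> ring

lemma trace_diag_mul (v w : Fin 3 → ℝ) :
    (Matrix.diagonal v * Matrix.diagonal w : Mat3).trace = v 0 * w 0 + v 1 * w 1 + v 2 * w 2 := by
  rw [Matrix.diagonal_mul_diagonal, Matrix.trace_diagonal]
  simp [Fin.sum_univ_three]

lemma conj_lin (g : Mat3) (hg : g * gᵀ = 1) (x y : ℝ) (V : Mat3) :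
    g * (x•(1:Mat3) + y•V) * gᵀ = x•(1:Mat3) + y•(g*V*gᵀ) := by
  rw [Matrix.mul_add, Matrix.add_mul, Matrix.mul_smul, Matrix.mul_one, Matrix.smul_mul, hg,
    Matrix.mul_smul, Matrix.smul_mul]

end AuxO2

end AuxO2

set_option maxHeartbeats 400000 in
open AuxO2 in
/-- an `n`-tuple of real symmetric 3×3 matrices has at least isotropy `[O(2)]`
(a rotation brings every `aₖ` to the form `diag(pₖ,pₖ,qₖ)`) iff each deviator has a repeated
eigenvalue — equivalently `(tr((dev aₖ)²))³ = 54 (det(dev aₖ))²` — and every pair of deviators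
satisfies the Cauchy–Schwarz equality. -/
theorem isotropy_O2_iff {n : ℕ} (a : Fin n → Mat3) (hsym : ∀ k, (a k)ᵀ = a k) :
    (∃ g : Mat3, IsSO3 g ∧ ∀ k, ∃ p q : ℝ,
        g * a k * gᵀ = Matrix.diagonal ![p, p, q]) ↔
    ((∀ k, ((dev (a k) * dev (a k)).trace) ^ 3 = 54 * (dev (a k)).det ^ 2) ∧
     (∀ k l, ((dev (a k) * dev (a l)).trace) ^ 2 =
        (dev (a k) * dev (a k)).trace * (dev (a l) * dev (a l)).trace)) := by
  constructor
  · rintro ⟨g, ⟨hg, hdet⟩, hdiag⟩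
    have key : ∀ k, ∃ d : ℝ, g * dev (a k) * gᵀ = Matrix.diagonal ![d,d,-2*d] := by
      intro k
      obtain ⟨p, q, hpq⟩ := hdiag k
      exact ⟨(p-q)/3, by rw [conj_dev g _ hg, hpq, dev_diag]⟩
    choose d hd using key
    have main : ∀ k l, (dev (a k) * dev (a l)).trace = 6*(d k * d l) := by
      intro k l
      have hAr := conj_recover g (dev (a k)) _ hg (hd k)
      have hBr := conj_recover g (dev (a l)) _ hg (hd l)
      have hAB : dev (a k) * dev (a l)
          = gᵀ * (Matrix.diagonal ![d k, d k, -2*d k] * Matrix.diagonal ![d l, d l, -2*d l]) * g := by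
        rw [hAr, hBr]
        simp only [Matrix.mul_assoc]
        rw [← Matrix.mul_assoc g gᵀ, hg, Matrix.one_mul]
      rw [hAB, Matrix.trace_mul_cycle, ← Matrix.mul_assoc, hg, Matrix.one_mul, trace_diag_mul]
      simp only [Matrix.cons_val_zero, Matrix.cons_val_one, Matrix.head_cons,
        Matrix.cons_val_two, Matrix.tail_cons]
      ring
    have dets : ∀ k, (dev (a k)).det = -2*(d k)^3 := by
      intro k
      have hAr := conj_recover g (dev (a k)) _ hg (hd k)
      rw [hAr, Matrix.det_mul, Matrix.det_mul, Matrix.det_transpose, hdet, Matrix.det_diagonal]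
      simp [Fin.prod_univ_three]
      ring
    constructor
    · intro k; rw [main k k, dets k]; ring
    · intro k l; rw [main k l, main k k, main l l]; ring
  · rintro ⟨hrep, hcs⟩
    have hds : ∀ k, (dev (a k))ᵀ = dev (a k) := fun k => dev_transpose _ (hsym k)
    have hdt : ∀ k, (dev (a k)).trace = 0 := fun k => dev_trace _
    choose r u hu hm hT using fun k => exists_axis (dev (a k)) (hds k) (hdt k) (hrep k)
    by_cases hall : ∀ k, r k = 0
    · refine ⟨1, ⟨by simp, by simp⟩, fun k => ?_⟩
      obtain ⟨t, htdef⟩ : ∃ t : ℝ, t = (a k).trace/3 := ⟨_, rfl⟩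
      refine ⟨t, t, ?_⟩
      have hdev0 : dev (a k) = 0 := by rw [hm k, hall k]; simp
      have hak : a k = t • (1:Mat3) := by
        conv_lhs => rw [dev_add (a k)]
        rw [hdev0, zero_add, htdef]
      rw [Matrix.one_mul, Matrix.transpose_one, Matrix.mul_one, hak, smul_one_diag]
    · push_neg at hall
      obtain ⟨k0, hk0⟩ := hall
      obtain ⟨g, hgSO, hgu⟩ := exists_rot (u k0) (hu k0)
      have hgV : g * vecMulVec (u k0) (u k0) * gᵀ = Matrix.diagonal ![0,0,1] := by
        rw [conj_vvt, hgu, vvt_e3]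
      have halign : ∀ k, r k ≠ 0 → vecMulVec (u k) (u k) = vecMulVec (u k0) (u k0) := by
        intro k hrk
        by_cases hkk : k = k0
        · rw [hkk]
        have hpair := hcs k k0
        have hklne : dev (a k) * dev (a k0) ≠ dev (a k) * dev (a k) ∨ True := Or.inr trivial
        rw [hT k, hT k0] at hpair
        rw [hm k, hm k0, trace_pair _ _ _ _ (hu k) (hu k0)] at hpair
        set c : ℝ := u k 0 * u k0 0 + u k 1 * u k0 1 + u k 2 * u k0 2 with hc
        have h1 : ((9*c^2-3)^2 - 36) * ((r k)^2 * (r k0)^2) = 0 := by linear_combination hpair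
        have h2 : (9*c^2-3)^2 - 36 = 0 := by
          rcases mul_eq_zero.mp h1 with h | h
          · exact h
          · exact absurd h (by positivity)
        have hc2 : c^2 = 1 := by
          have h3 : (c^2 - 1)*(81*c^2+27) = 0 := by linear_combination h2
          rcases mul_eq_zero.mp h3 with h | h
          · linarith
          · nlinarith [sq_nonneg c]
        have hsq : (u k 0 - c*u k0 0)^2 + (u k 1 - c*u k0 1)^2 + (u k 2 - c*u k0 2)^2 = 0 := by
          linear_combination (hu k) + c^2*(hu k0) + (-2*c)*hc + (-1)*hc2
        have e0 : u k 0 = c * u k0 0 := by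
          have hx : (u k 0 - c*u k0 0)^2 = 0 := by
            nlinarith [sq_nonneg (u k 0 - c*u k0 0), sq_nonneg (u k 1 - c*u k0 1),
              sq_nonneg (u k 2 - c*u k0 2)]
          have := pow_eq_zero_iff (n := 2) (by norm_num) |>.1 hx
          linarith [this]
        have e1 : u k 1 = c * u k0 1 := by
          have hx : (u k 1 - c*u k0 1)^2 = 0 := by
            nlinarith [sq_nonneg (u k 0 - c*u k0 0), sq_nonneg (u k 1 - c*u k0 1),
              sq_nonneg (u k 2 - c*u k0 2)]
          have := pow_eq_zero_iff (n := 2) (by norm_num) |>.1 hx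
          linarith [this]
        have e2 : u k 2 = c * u k0 2 := by
          have hx : (u k 2 - c*u k0 2)^2 = 0 := by
            nlinarith [sq_nonneg (u k 0 - c*u k0 0), sq_nonneg (u k 1 - c*u k0 1),
              sq_nonneg (u k 2 - c*u k0 2)]
          have := pow_eq_zero_iff (n := 2) (by norm_num) |>.1 hx
          linarith [this]
        have hcomp : ∀ i, u k i = c * u k0 i := by
          intro i
          have : i = 0 ∨ i = 1 ∨ i = 2 := by omega
          rcases this with h | h | h <;> subst h
          · exact e0
          · exact e1
          · exact e2
        ext i j
        simp only [Matrix.vecMulVec_apply]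
        rw [hcomp i, hcomp j]
        linear_combination (u k0 i * u k0 j) * hc2
      have hak : ∀ k, a k = ((a k).trace/3 + r k) • (1:Mat3)
          + (-(3*r k)) • vecMulVec (u k0) (u k0) := by
        intro k
        by_cases hrk : r k = 0
        · conv_lhs => rw [dev_add (a k)]
          rw [hm k, hrk]
          module
        · conv_lhs => rw [dev_add (a k)]
          rw [hm k, halign k hrk]
          module
      refine ⟨g, hgSO, fun k => ?_⟩
      refine ⟨(a k).trace/3 + r k, (a k).trace/3 - 2*r k, ?_⟩
      have hstep : g * a k * gᵀ = ((a k).trace/3 + r k) • (1:Mat3)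
          + (-(3*r k)) • (g * vecMulVec (u k0) (u k0) * gᵀ) := by
        conv_lhs => rw [hak k]
        rw [conj_lin g hgSO.1]
      rw [hstep, hgV, smul_one_add_smul_diag,
        show ((a k).trace/3 + r k) + (-(3*r k)) = (a k).trace/3 - 2*r k from by ring]
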